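/- Let n ≥ 6 be a rational integer such that p = (2n−1)(2n+1), q = (2n−1)(2n+3) and r = (2n+1)(2n+3) are all square-free, let K = ℚ(√p, √q), set ε_p = 2n + √p, ε_r = 2n + 2 + √r, μ = n + 3/2 + (1/2)√p + (1/2)√q + (1/2)√r, α_t = 1 + ε_p + t(μ−1) and ω_t = (ε_r^{−1} + ε_p)/2 + t(μ−2). Then N((ε_p^{−1}+ε_r)/2) = (2n+1)², N(μ) = 4, N(α_t) = ((4n+2)(t+1) − t²)² for 3 ≤ t ≤ 2n−2, and N(ω_t) = (2n+1 + (4n+2)t − 2t²)² for 2 ≤ t ≤ 2n−1, where N denotes the field norm from K to ℚ. -/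

import Mathlib

open NumberField

lemma aux_not_sq (m : ℤ) (hm : Squarefree m) (h1 : 1 < m) (u : ℚ) : u ^ 2 ≠ (m : ℚ) := by
  intro h
  have hden : (u.den : ℤ) ≠ 0 := by exact_mod_cast u.den_nz
  have h2 : u.num ^ 2 = m * (u.den : ℤ) ^ 2 := by
    rw [← u.num_div_den] at h
    field_simp at h
    rw [mul_comm]; exact_mod_cast h
  have hdvd : (u.den : ℤ) ^ 2 ∣ u.num ^ 2 := ⟨m, by linarith [h2]⟩
  have hcop : Nat.Coprime (u.num.natAbs ^ 2) (u.den ^ 2) := Nat.Coprime.pow _ _ u.reduced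
  have hdvd' : u.den ^ 2 ∣ u.num.natAbs ^ 2 := by
    have := Int.natAbs_dvd_natAbs.mpr hdvd
    simpa [Int.natAbs_pow] using this
  have hden1 : u.den = 1 := by
    have h1' : u.den ^ 2 ∣ 1 := by
      have := Nat.dvd_gcd hdvd' dvd_rfl
      rwa [Nat.Coprime.gcd_eq_one hcop] at this
    have h2' := Nat.le_of_dvd one_pos h1'
    nlinarith [u.pos]
  have hm2 : m = u.num * u.num := by
    have : u.num ^ 2 = m := by rw [h2, hden1]; push_cast; ring
    nlinarith [this]
  have : IsUnit u.num := hm u.num ⟨1, by linarith [hm2]⟩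
  rcases Int.isUnit_iff.mp this with h' | h' <;> rw [h'] at hm2 <;> omega

lemma det_fin_four' {R : Type*} [CommRing R]
    (a b c d e f g h i j k l m o s t : R) :
    Matrix.det !![a,b,c,d; e,f,g,h; i,j,k,l; m,o,s,t] =
      a*(f*(k*t - l*s) - g*(j*t - l*o) + h*(j*s - k*o))
      - b*(e*(k*t - l*s) - g*(i*t - l*m) + h*(i*s - k*m))
      + c*(e*(j*t - l*o) - f*(i*t - l*m) + h*(i*o - j*m))
      - d*(e*(j*s - k*o) - f*(i*s - k*m) + g*(i*o - j*m)) := by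
  simp [Matrix.det_succ_row_zero, Fin.sum_univ_succ, Fin.succAbove]
  ring

theorem norms_of_indecomposables_first_family
    (n p q r : ℤ) (hn : 6 ≤ n)
    (hp : p = (2 * n - 1) * (2 * n + 1)) (hq : q = (2 * n - 1) * (2 * n + 3))
    (hr : r = (2 * n + 1) * (2 * n + 3))
    (hpsf : Squarefree p) (hqsf : Squarefree q) (hrsf : Squarefree r)
    (K : Type*) [Field K] [NumberField K]
    (sp sq sr : K) (hsp : sp ^ 2 = (p : K)) (hsq : sq ^ 2 = (q : K))
    (hsr : sr ^ 2 = (r : K)) (hmul : sp * sq = (2 * (n : K) - 1) * sr)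
    (hgen : Algebra.adjoin ℚ {sp, sq} = ⊤)
    (εp εr μ : K)
    (hεp : εp = 2 * (n : K) + sp) (hεr : εr = 2 * (n : K) + 2 + sr)
    (hμ : μ = (n : K) + 3 / 2 + (1 / 2) * sp + (1 / 2) * sq + (1 / 2) * sr) :
    Algebra.norm ℚ ((εp⁻¹ + εr) / 2) = (2 * (n : ℚ) + 1) ^ 2 ∧
    Algebra.norm ℚ μ = 4 ∧
    (∀ t : ℤ, 3 ≤ t → t ≤ 2 * n - 2 →
      Algebra.norm ℚ (1 + εp + (t : K) * (μ - 1)) =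
        ((4 * (n : ℚ) + 2) * ((t : ℚ) + 1) - (t : ℚ) ^ 2) ^ 2) ∧
    (∀ t : ℤ, 2 ≤ t → t ≤ 2 * n - 1 →
      Algebra.norm ℚ ((εr⁻¹ + εp) / 2 + (t : K) * (μ - 2)) =
        (2 * (n : ℚ) + 1 + (4 * (n : ℚ) + 2) * (t : ℚ) - 2 * (t : ℚ) ^ 2) ^ 2) := by
  have hnQ : (6:ℚ) ≤ (n:ℚ) := by exact_mod_cast hn
  have hKinj : Function.Injective (Rat.cast : ℚ → K) := Rat.cast_injective
  have hpns : ∀ u:ℚ, u^2 ≠ (p:ℚ) := aux_not_sq p hpsf (by nlinarith [hp])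
  have hqns : ∀ u:ℚ, u^2 ≠ (q:ℚ) := aux_not_sq q hqsf (by nlinarith [hq])
  have hrns : ∀ u:ℚ, u^2 ≠ (r:ℚ) := aux_not_sq r hrsf (by nlinarith [hr])
  have hpQ : (p:ℚ) = (2*(n:ℚ)-1)*(2*(n:ℚ)+1) := by rw [hp]; push_cast; ring
  have hqQ : (q:ℚ) = (2*(n:ℚ)-1)*(2*(n:ℚ)+3) := by rw [hq]; push_cast; ring
  have hrQ : (r:ℚ) = (2*(n:ℚ)+1)*(2*(n:ℚ)+3) := by rw [hr]; push_cast; ring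
  have hk0 : (2*(n:ℚ)-1) ≠ 0 := by linarith
  have hpK : (p:K) = (2*(n:K)-1)*(2*(n:K)+1) := by rw [hp]; push_cast; ring
  have hqK : (q:K) = (2*(n:K)-1)*(2*(n:K)+3) := by rw [hq]; push_cast; ring
  have hrK : (r:K) = (2*(n:K)+1)*(2*(n:K)+3) := by rw [hr]; push_cast; ring
  have hknK : (2*(n:K)-1) ≠ 0 := by
    have h' : ((2*(n:ℚ)-1 : ℚ):K) ≠ 0 := Rat.cast_ne_zero.mpr hk0
    push_cast at h'; exact h'
  -- derived multiplication rules
  have hspsr : sp * sr = (2*(n:K)+1) * sq := by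
    apply mul_left_cancel₀ hknK
    linear_combination (-sp) * hmul + sq * hsp + sq * hpK
  have hsqsr : sq * sr = (2*(n:K)+3) * sp := by
    apply mul_left_cancel₀ hknK
    linear_combination (-sq) * hmul + sp * hsq + sp * hqK
  -- rational coefficients: a + b√p = 0 → a = b = 0
  have Lp : ∀ a b : ℚ, (a:K) + (b:K)*sp = 0 → a = 0 ∧ b = 0 := by
    intro a b h
    by_cases hb : b = 0
    · refine ⟨?_, hb⟩
      rw [hb] at h; push_cast at h
      simpa using hKinj (by simpa using h : ((a:ℚ):K) = ((0:ℚ):K))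
    · exfalso
      have hbK : (b:K) ≠ 0 := Rat.cast_ne_zero.mpr hb
      apply hpns (-(a/b))
      apply hKinj
      have hspv : sp = -((a:K)/(b:K)) := by
        field_simp
        linear_combination h
      calc (((-(a/b))^2 : ℚ) : K) = (-((a:K)/(b:K)))^2 := by push_cast; ring
        _ = sp^2 := by rw [← hspv]
        _ = (p:K) := hsp
        _ = (((p:ℚ)):K) := by norm_cast
  have Lpq : ∀ x y u v : ℚ, ((x:K) + (y:K)*sp) + ((u:K) + (v:K)*sp) * sq = 0 →
      x = 0 ∧ y = 0 ∧ u = 0 ∧ v = 0 := by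
    intro x y u v h
    have huv : u = 0 ∧ v = 0 := by
      by_contra hc
      have hw : u^2 - v^2*(p:ℚ) ≠ 0 := by
        intro hw0
        rcases eq_or_ne v 0 with hv | hv
        · rw [hv] at hw0
          have hu : u = 0 := by nlinarith [hw0]
          exact hc ⟨hu, hv⟩
        · exact hpns (u/v) (by field_simp; linear_combination hw0)
      have hsqval : ((u^2 - v^2*(p:ℚ) :ℚ):K) * sq
          = ((-(x*u) + y*v*(p:ℚ) :ℚ):K) + (((-(y*u) + x*v):ℚ):K) * sp := by
        push_cast
        linear_combination ((u:K) - (v:K)*sp) * h + ((v:K)^2*sq + (y:K)*(v:K)) * hsp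
      obtain ⟨h1, h2⟩ := Lp
          ((-(x*u) + y*v*(p:ℚ))^2 + (-(y*u) + x*v)^2*(p:ℚ) - (u^2 - v^2*(p:ℚ))^2*(q:ℚ))
          (2*(-(x*u) + y*v*(p:ℚ))*(-(y*u) + x*v)) (by
        push_cast at hsqval ⊢
        linear_combination
          (-((-((x:K)*(u:K)) + (y:K)*(v:K)*(p:K)) + ((-((y:K)*(u:K)) + (x:K)*(v:K)))*sp
             + ((u:K)^2 - (v:K)^2*(p:K))*sq)) * hsqval
          + ((u:K)^2 - (v:K)^2*(p:K))^2 * hsq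
          + (-((-((y:K)*(u:K)) + (x:K)*(v:K))^2)) * hsp)
      rcases mul_eq_zero.mp (show (-(x*u) + y*v*(p:ℚ)) * (-(y*u) + x*v) = 0 by linarith) with hE0 | hF0
      · -- E = 0 : F^2 p = w^2 q, contradict r not a square
        apply hrns ((-(y*u) + x*v)*(p:ℚ)/((u^2 - v^2*(p:ℚ))*(2*(n:ℚ)-1)))
        field_simp
        linear_combination (p:ℚ)*h1 + (-(p:ℚ)*(-(x*u) + y*v*(p:ℚ)))*hE0
          + ((u^2 - v^2*(p:ℚ))^2*(q:ℚ))*hpQ + ((u^2 - v^2*(p:ℚ))^2*(2*(n:ℚ)-1)*(2*(n:ℚ)+1))*hqQ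
          + (-(u^2 - v^2*(p:ℚ))^2*(2*(n:ℚ)-1)^2)*hrQ
      · -- F = 0 : E^2 = w^2 q, contradict q not a square
        apply hqns ((-(x*u) + y*v*(p:ℚ))/(u^2 - v^2*(p:ℚ)))
        field_simp
        linear_combination h1 + (-(-(y*u) + x*v)*(p:ℚ))*hF0
    obtain ⟨hu, hv⟩ := huv
    rw [hu, hv] at h
    obtain ⟨hx, hy⟩ := Lp x y (by push_cast at h ⊢; linear_combination h)
    exact ⟨hx, hy, hu, hv⟩
  have Lmain : ∀ a b c d : ℚ, (a:K) + (b:K)*sp + (c:K)*sq + (d:K)*sr = 0 →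
      a = 0 ∧ b = 0 ∧ c = 0 ∧ d = 0 := by
    intro a b c d h
    obtain ⟨h1, h2, h3, h4⟩ := Lpq ((2*(n:ℚ)-1)*a) ((2*(n:ℚ)-1)*b) ((2*(n:ℚ)-1)*c) d (by
      push_cast
      linear_combination (2*(n:K)-1)*h + (d:K)*hmul)
    refine ⟨?_, ?_, ?_, h4⟩
    · rcases mul_eq_zero.mp h1 with h'|h'; exact absurd h' hk0; exact h'
    · rcases mul_eq_zero.mp h2 with h'|h'; exact absurd h' hk0; exact h'
    · rcases mul_eq_zero.mp h3 with h'|h'; exact absurd h' hk0; exact h'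
  -- linear independence of 1, sp, sq, sr
  have hli : LinearIndependent ℚ ![(1:K), sp, sq, sr] := by
    rw [Fintype.linearIndependent_iff]
    intro g hg
    rw [Fin.sum_univ_four] at hg
    simp only [Matrix.cons_val_zero, Matrix.cons_val_one, Matrix.head_cons,
      Matrix.cons_val_two, Matrix.tail_cons, Matrix.cons_val_three, Rat.smul_def] at hg
    obtain ⟨e0, e1, e2, e3⟩ := Lmain (g 0) (g 1) (g 2) (g 3) (by linear_combination hg)
    intro i; fin_cases i
    · exact e0
    · exact e1
    · exact e2
    · exact e3
  -- span
  set W : Submodule ℚ K := Submodule.span ℚ {1, sp, sq, sr} with hWdef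
  have mem1 : (1:K) ∈ W := Submodule.subset_span (by simp)
  have memsp : sp ∈ W := Submodule.subset_span (by simp)
  have memsq : sq ∈ W := Submodule.subset_span (by simp)
  have memsr : sr ∈ W := Submodule.subset_span (by simp)
  have hsmul : ∀ (c : ℚ) (z : K), z ∈ W → ((c:ℚ):K) * z ∈ W := by
    intro c z hz
    rw [← Rat.smul_def]; exact W.smul_mem _ hz
  have hprod : ∀ x ∈ ({1, sp, sq, sr} : Set K), ∀ y ∈ ({1, sp, sq, sr} : Set K), x * y ∈ W := by
    intro x hx y hy
    simp only [Set.mem_insert_iff, Set.mem_singleton_iff] at hx hy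
    rcases hx with hx'|hx'|hx'|hx' <;> rcases hy with hy'|hy'|hy'|hy' <;> rw [hx', hy']
    · simpa using mem1
    · simpa using memsp
    · simpa using memsq
    · simpa using memsr
    · simpa using memsp
    · rw [show sp * sp = (((p:ℚ)):K) * 1 by push_cast; linear_combination hsp]
      exact hsmul _ _ mem1
    · rw [show sp * sq = ((2*(n:ℚ)-1 :ℚ):K) * sr by push_cast; linear_combination hmul]
      exact hsmul _ _ memsr
    · rw [show sp * sr = ((2*(n:ℚ)+1 :ℚ):K) * sq by push_cast; linear_combination hspsr]
      exact hsmul _ _ memsq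
    · simpa using memsq
    · rw [show sq * sp = ((2*(n:ℚ)-1 :ℚ):K) * sr by push_cast; linear_combination hmul]
      exact hsmul _ _ memsr
    · rw [show sq * sq = (((q:ℚ)):K) * 1 by push_cast; linear_combination hsq]
      exact hsmul _ _ mem1
    · rw [show sq * sr = ((2*(n:ℚ)+3 :ℚ):K) * sp by push_cast; linear_combination hsqsr]
      exact hsmul _ _ memsp
    · simpa using memsr
    · rw [show sr * sp = ((2*(n:ℚ)+1 :ℚ):K) * sq by push_cast; linear_combination hspsr]
      exact hsmul _ _ memsq
    · rw [show sr * sq = ((2*(n:ℚ)+3 :ℚ):K) * sp by push_cast; linear_combination hsqsr]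
      exact hsmul _ _ memsp
    · rw [show sr * sr = (((r:ℚ)):K) * 1 by push_cast; linear_combination hsr]
      exact hsmul _ _ mem1
  have hWmulc : ∀ y ∈ W, ∀ x ∈ W, x * y ∈ W := by
    intro y hy
    induction hy using Submodule.span_induction with
    | mem z hz =>
        intro x hx
        induction hx using Submodule.span_induction with
        | mem w hw => exact hprod _ hw _ hz
        | zero => simpa using W.zero_mem
        | add a b ha hb iha ihb => rw [add_mul]; exact W.add_mem iha ihb
        | smul c a ha iha => rw [smul_mul_assoc]; exact W.smul_mem _ iha
    | zero => intro x hx; simpa using W.zero_mem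
    | add a b ha hb iha ihb => intro x hx; rw [mul_add]; exact W.add_mem (iha x hx) (ihb x hx)
    | smul c a ha iha => intro x hx; rw [mul_smul_comm]; exact W.smul_mem _ (iha x hx)
  have hWtop : W = ⊤ := by
    have hsub : Algebra.adjoin ℚ {sp, sq} ≤
        W.toSubalgebra mem1 (fun x y hx hy => hWmulc y hy x hx) := by
      apply Algebra.adjoin_le
      intro z hz
      rcases hz with rfl | hz
      · exact memsp
      · rw [Set.mem_singleton_iff] at hz; rw [hz]; exact memsq
    rw [hgen] at hsub
    rw [eq_top_iff]
    intro x _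
    exact hsub (show x ∈ (⊤ : Subalgebra ℚ K) from trivial)
  have hrange : Set.range ![(1:K), sp, sq, sr] = {1, sp, sq, sr} := by
    ext z
    constructor
    · rintro ⟨i, rfl⟩; fin_cases i <;> simp
    · rintro (rfl|rfl|rfl|rfl)
      · exact ⟨0, rfl⟩
      · exact ⟨1, rfl⟩
      · exact ⟨2, rfl⟩
      · exact ⟨3, rfl⟩
  let b : Module.Basis (Fin 4) ℚ K := Module.Basis.mk hli (by rw [hrange, ← hWdef, hWtop])
  have hspan : ⊤ ≤ Submodule.span ℚ (Set.range ![(1:K), sp, sq, sr]) := by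
    rw [hrange, ← hWdef, hWtop]
  set b : Module.Basis (Fin 4) ℚ K := Module.Basis.mk hli hspan with hbdef
  have hb : ∀ i, b i = ![(1:K), sp, sq, sr] i := fun i => by rw [hbdef, Module.Basis.mk_apply]
  have key : ∀ (c : Fin 4 → ℚ) (z : K) (i : Fin 4),
      z = ∑ j, c j • (![(1:K),sp,sq,sr] j) → b.repr z i = c i := by
    intro c z i hz
    have hz' : z = ∑ j, c j • b j := by rw [hz]; congr 1; ext j; rw [hb]
    rw [hz', Module.Basis.repr_sum_self]
  have hnorm : ∀ A B C D : ℚ,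
      Algebra.norm ℚ (((A:ℚ):K) + ((B:ℚ):K)*sp + ((C:ℚ):K)*sq + ((D:ℚ):K)*sr)
      = (A^2 + D^2*((2*(n:ℚ)+1)*(2*(n:ℚ)+3)) - B^2*((2*(n:ℚ)-1)*(2*(n:ℚ)+1))
          - C^2*((2*(n:ℚ)-1)*(2*(n:ℚ)+3)))^2
        - (2*A*D - 2*B*C*(2*(n:ℚ)-1))^2 * ((2*(n:ℚ)+1)*(2*(n:ℚ)+3)) := by
    intro A B C D
    rw [Algebra.norm_eq_matrix_det b]
    have hM : Algebra.leftMulMatrix b (((A:ℚ):K) + ((B:ℚ):K)*sp + ((C:ℚ):K)*sq + ((D:ℚ):K)*sr)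
        = !![A, B*(p:ℚ), C*(q:ℚ), D*(r:ℚ);
             B, A, D*(2*(n:ℚ)+3), C*(2*(n:ℚ)+3);
             C, D*(2*(n:ℚ)+1), A, B*(2*(n:ℚ)+1);
             D, C*(2*(n:ℚ)-1), B*(2*(n:ℚ)-1), A] := by
      ext i j
      rw [Algebra.leftMulMatrix_eq_repr_mul]
      fin_cases j
      · rw [key ![A,B,C,D] _ i (by
          simp [hb, Fin.sum_univ_four, Rat.smul_def, Fin.isValue]
          try push_cast
          try ring)]
        fin_cases i <;> simp
      · rw [key ![B*(p:ℚ), A, D*(2*(n:ℚ)+1), C*(2*(n:ℚ)-1)] _ i (by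
          simp [hb, Fin.sum_univ_four, Rat.smul_def, Fin.isValue]
          push_cast
          linear_combination (B:K)*hsp + (C:K)*hmul + (D:K)*hspsr)]
        fin_cases i <;> simp
      · rw [key ![C*(q:ℚ), D*(2*(n:ℚ)+3), A, B*(2*(n:ℚ)-1)] _ i (by
          simp [hb, Fin.sum_univ_four, Rat.smul_def, Fin.isValue]
          push_cast
          linear_combination (C:K)*hsq + (B:K)*hmul + (D:K)*hsqsr)]
        fin_cases i <;> simp
      · rw [key ![D*(r:ℚ), C*(2*(n:ℚ)+3), B*(2*(n:ℚ)+1), A] _ i (by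
          simp [hb, Fin.sum_univ_four, Rat.smul_def, Fin.isValue]
          push_cast
          linear_combination (D:K)*hsr + (B:K)*hspsr + (C:K)*hsqsr)]
        fin_cases i <;> simp
    rw [hM, det_fin_four', hpQ, hqQ, hrQ]
    ring
  have hεpinv : εp⁻¹ = 2*(n:K) - sp := by
    rw [hεp]
    exact inv_eq_of_mul_eq_one_right (by linear_combination -hsp - hpK)
  have hεrinv : εr⁻¹ = 2*(n:K) + 2 - sr := by
    rw [hεr]
    exact inv_eq_of_mul_eq_one_right (by linear_combination -hsr - hrK)
  refine ⟨?_, ?_, ?_, ?_⟩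
  · rw [show (εp⁻¹ + εr)/2 = ((2*(n:ℚ)+1 :ℚ):K) + ((-1/2 :ℚ):K)*sp + ((0:ℚ):K)*sq
        + ((1/2:ℚ):K)*sr by rw [hεpinv, hεr]; push_cast; ring]
    rw [hnorm]; ring
  · rw [show μ = (((n:ℚ)+3/2 :ℚ):K) + ((1/2:ℚ):K)*sp + ((1/2:ℚ):K)*sq + ((1/2:ℚ):K)*sr by
      rw [hμ]; push_cast; ring]
    rw [hnorm]; ring
  · intro t _ _
    rw [show 1 + εp + (t:K)*(μ-1) = ((2*(n:ℚ)+1+(t:ℚ)*((n:ℚ)+1/2) :ℚ):K)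
        + ((1+(t:ℚ)/2 :ℚ):K)*sp + (((t:ℚ)/2 :ℚ):K)*sq + (((t:ℚ)/2 :ℚ):K)*sr by
      rw [hεp, hμ]; push_cast; ring]
    rw [hnorm]; push_cast; ring
  · intro t _ _
    rw [show (εr⁻¹ + εp)/2 + (t:K)*(μ-2) = ((2*(n:ℚ)+1+(t:ℚ)*((n:ℚ)-1/2) :ℚ):K)
        + (((1+(t:ℚ))/2 :ℚ):K)*sp + (((t:ℚ)/2 :ℚ):K)*sq + ((((t:ℚ)-1)/2 :ℚ):K)*sr by
      rw [hεrinv, hεp, hμ]; push_cast; ring]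
    rw [hnorm]; push_cast; ring
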